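/- Let C be a category with binary coproducts in which every coproduct inclusion is extensive. Then the pullback of any extensive morphism along a coproduct inclusion exists and is again extensive: if f : A → B is extensive and b₁ : B₁ → B is a coproduct inclusion, then the pullback f₁ : A₁ → B₁ of f along b₁ is extensive. -/

import Mathlib

open CategoryTheory CategoryTheory.Limits

universe v u

variable {C : Type u} [Category.{v} C]

/-- `i₁ : X₁ ⟶ X` and `i₂ : X₂ ⟶ X` form a binary coproduct diagram. -/
def IsCoprodDiagram {X₁ X₂ X : C} (i₁ : X₁ ⟶ X) (i₂ : X₂ ⟶ X) : Prop :=
  Nonempty (IsColimit (BinaryCofan.mk i₁ i₂))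

/-- `p₁ : X ⟶ X₁` and `p₂ : X ⟶ X₂` form a binary product diagram. -/
def IsProdDiagram {X X₁ X₂ : C} (p₁ : X ⟶ X₁) (p₂ : X ⟶ X₂) : Prop :=
  Nonempty (IsLimit (BinaryFan.mk p₁ p₂))

/-- Condition (E1): pullbacks of `f` along both inclusions of any binary coproduct diagram
exist and the resulting legs form a binary coproduct diagram. -/
def SatE1 {A X : C} (f : A ⟶ X) : Prop :=
  ∀ {X₁ X₂ : C} (x₁ : X₁ ⟶ X) (x₂ : X₂ ⟶ X), IsCoprodDiagram x₁ x₂ →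
    ∃ (A₁ A₂ : C) (a₁ : A₁ ⟶ A) (a₂ : A₂ ⟶ A) (f₁ : A₁ ⟶ X₁) (f₂ : A₂ ⟶ X₂),
      IsPullback a₁ f₁ f x₁ ∧ IsPullback a₂ f₂ f x₂ ∧ IsCoprodDiagram a₁ a₂

/-- Condition (E2): in any commutative diagram over `f` whose rows are binary coproduct
diagrams, both squares are pullbacks. -/
def SatE2 {A X : C} (f : A ⟶ X) : Prop :=
  ∀ {A₁ A₂ X₁ X₂ : C} (a₁ : A₁ ⟶ A) (a₂ : A₂ ⟶ A) (x₁ : X₁ ⟶ X) (x₂ : X₂ ⟶ X)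
    (f₁ : A₁ ⟶ X₁) (f₂ : A₂ ⟶ X₂),
    a₁ ≫ f = f₁ ≫ x₁ → a₂ ≫ f = f₂ ≫ x₂ →
    IsCoprodDiagram x₁ x₂ → IsCoprodDiagram a₁ a₂ →
    IsPullback a₁ f₁ f x₁ ∧ IsPullback a₂ f₂ f x₂

/-- A morphism is extensive if it satisfies (E1) and (E2). -/
def Extensive {A X : C} (f : A ⟶ X) : Prop := SatE1 f ∧ SatE2 f

/-- Condition (C1): pushouts of `f` along both projections of any binary product diagram
exist and the resulting legs form a binary product diagram. -/
def SatC1 {A X : C} (f : A ⟶ X) : Prop :=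
  ∀ {A₁ A₂ : C} (p₁ : A ⟶ A₁) (p₂ : A ⟶ A₂), IsProdDiagram p₁ p₂ →
    ∃ (X₁ X₂ : C) (q₁ : X ⟶ X₁) (q₂ : X ⟶ X₂) (f₁ : A₁ ⟶ X₁) (f₂ : A₂ ⟶ X₂),
      IsPushout p₁ f f₁ q₁ ∧ IsPushout p₂ f f₂ q₂ ∧ IsProdDiagram q₁ q₂

/-- Condition (C2): in any commutative diagram over `f` whose rows are binary product
diagrams, both squares are pushouts. -/
def SatC2 {A X : C} (f : A ⟶ X) : Prop :=
  ∀ {A₁ A₂ X₁ X₂ : C} (p₁ : A ⟶ A₁) (p₂ : A ⟶ A₂) (q₁ : X ⟶ X₁) (q₂ : X ⟶ X₂)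
    (f₁ : A₁ ⟶ X₁) (f₂ : A₂ ⟶ X₂),
    p₁ ≫ f₁ = f ≫ q₁ → p₂ ≫ f₂ = f ≫ q₂ →
    IsProdDiagram p₁ p₂ → IsProdDiagram q₁ q₂ →
    IsPushout p₁ f f₁ q₁ ∧ IsPushout p₂ f f₂ q₂

/-- A morphism is coextensive if it satisfies (C1) and (C2). -/
def Coextensive {A X : C} (f : A ⟶ X) : Prop := SatC1 f ∧ SatC2 f

/-- A coproduct inclusion: a morphism admitting a complementary inclusion forming
a binary coproduct diagram. -/
def IsCoprodInclusion {A X : C} (ι : A ⟶ X) : Prop :=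
  ∃ (A' : C) (ι' : A' ⟶ X), IsCoprodDiagram ι ι'

/-- An extremal epimorphism: whenever `e = i ≫ m` with `m` a monomorphism, `m` is an
isomorphism. -/
def IsExtremalEpi {A B : C} (e : A ⟶ B) : Prop :=
  ∀ {I : C} (i : A ⟶ I) (m : I ⟶ B), Mono m → i ≫ m = e → IsIso m

/-- The binary strict refinement property for an object `X`. -/
def BinaryStrictRefinement (X : C) : Prop :=
  ∀ {A₁ A₂ B₁ B₂ : C} (a₁ : X ⟶ A₁) (a₂ : X ⟶ A₂) (b₁ : X ⟶ B₁) (b₂ : X ⟶ B₂),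
    IsProdDiagram a₁ a₂ → IsProdDiagram b₁ b₂ →
    ∃ (C₁₁ C₁₂ C₂₁ C₂₂ : C)
      (α₁₁ : A₁ ⟶ C₁₁) (α₁₂ : A₁ ⟶ C₁₂) (α₂₁ : A₂ ⟶ C₂₁) (α₂₂ : A₂ ⟶ C₂₂)
      (β₁₁ : B₁ ⟶ C₁₁) (β₁₂ : B₂ ⟶ C₁₂) (β₂₁ : B₁ ⟶ C₂₁) (β₂₂ : B₂ ⟶ C₂₂),
      a₁ ≫ α₁₁ = b₁ ≫ β₁₁ ∧ a₁ ≫ α₁₂ = b₂ ≫ β₁₂ ∧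
      a₂ ≫ α₂₁ = b₁ ≫ β₂₁ ∧ a₂ ≫ α₂₂ = b₂ ≫ β₂₂ ∧
      IsProdDiagram α₁₁ α₁₂ ∧ IsProdDiagram α₂₁ α₂₂ ∧
      IsProdDiagram β₁₁ β₂₁ ∧ IsProdDiagram β₁₂ β₂₂

/-- A jointly monomorphic pair which is a reflexive, symmetric and transitive relation. -/
def IsEquivalenceRelationPair {R X : C} (r₁ r₂ : R ⟶ X) : Prop :=
  (∀ {T : C} (a b : T ⟶ R), a ≫ r₁ = b ≫ r₁ → a ≫ r₂ = b ≫ r₂ → a = b) ∧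
  (∃ d : X ⟶ R, d ≫ r₁ = 𝟙 X ∧ d ≫ r₂ = 𝟙 X) ∧
  (∃ s : R ⟶ R, s ≫ r₁ = r₂ ∧ s ≫ r₂ = r₁) ∧
  (∀ {P : C} (p₁ p₂ : P ⟶ R), IsPullback p₁ p₂ r₂ r₁ →
    ∃ t : P ⟶ R, t ≫ r₁ = p₁ ≫ r₁ ∧ t ≫ r₂ = p₂ ≫ r₂)

namespace PfAux

/-- Swapping a binary coproduct diagram. -/
lemma swap {X₁ X₂ X : C} {i₁ : X₁ ⟶ X} {i₂ : X₂ ⟶ X} (h : IsCoprodDiagram i₁ i₂) :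
    IsCoprodDiagram i₂ i₁ := by
  obtain ⟨c⟩ := h
  refine ⟨BinaryCofan.isColimitMk (fun s => c.desc (BinaryCofan.mk s.inr s.inl))
    (fun s => by exact c.fac (BinaryCofan.mk s.inr s.inl) ⟨WalkingPair.right⟩)
    (fun s => by exact c.fac (BinaryCofan.mk s.inr s.inl) ⟨WalkingPair.left⟩)
    (fun s m h1 h2 => c.uniq (BinaryCofan.mk s.inr s.inl) m ?_)⟩
  rintro ⟨⟨⟩⟩ <;> simpa

/-- Transporting a binary coproduct diagram along isomorphisms of its summands. -/
lemma transport {P₁ P₂ R₁ R₂ A : C} {r₁ : R₁ ⟶ A} {r₂ : R₂ ⟶ A}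
    (e₁ : P₁ ≅ R₁) (e₂ : P₂ ≅ R₂) {v₁ : P₁ ⟶ A} {v₂ : P₂ ⟶ A}
    (hv₁ : e₁.hom ≫ r₁ = v₁) (hv₂ : e₂.hom ≫ r₂ = v₂)
    (h : IsCoprodDiagram r₁ r₂) : IsCoprodDiagram v₁ v₂ := by
  obtain ⟨c⟩ := h
  have fl : ∀ s : BinaryCofan R₁ R₂, r₁ ≫ c.desc s = s.inl := fun s =>
    c.fac s ⟨WalkingPair.left⟩
  have fr : ∀ s : BinaryCofan R₁ R₂, r₂ ≫ c.desc s = s.inr := fun s =>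
    c.fac s ⟨WalkingPair.right⟩
  refine ⟨BinaryCofan.isColimitMk
    (fun s => c.desc (BinaryCofan.mk (e₁.inv ≫ s.inl) (e₂.inv ≫ s.inr)))
    (fun s => ?_) (fun s => ?_) (fun s m h1 h2 => ?_)⟩
  · subst hv₁
    exact (Category.assoc _ _ _).trans ((congrArg (e₁.hom ≫ ·) (fl _)).trans (e₁.hom_inv_id_assoc _))
  · subst hv₂
    exact (Category.assoc _ _ _).trans ((congrArg (e₂.hom ≫ ·) (fr _)).trans (e₂.hom_inv_id_assoc _))
  · refine c.uniq (BinaryCofan.mk (e₁.inv ≫ s.inl) (e₂.inv ≫ s.inr)) m ?_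
    rintro ⟨⟨⟩⟩
    · have : r₁ ≫ m = e₁.inv ≫ s.inl := by
        rw [← hv₁] at h1
        rw [← h1]
        simp
      exact this
    · have : r₂ ≫ m = e₂.inv ≫ s.inr := by
        rw [← hv₂] at h2
        rw [← h2]
        simp
      exact this

/-- Associativity of binary coproduct diagrams: if `B₁ = Y₁ ⊔ Y₂` and `B = B₁ ⊔ B₂`, then
`B = Y₁ ⊔ (Y₂ ⊔ B₂)`. -/
lemma assoc [HasBinaryCoproducts C] {Y₁ Y₂ B₁ B₂ B : C}
    {y₁ : Y₁ ⟶ B₁} {y₂ : Y₂ ⟶ B₁} {b₁ : B₁ ⟶ B} {b₂ : B₂ ⟶ B}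
    (hy : IsCoprodDiagram y₁ y₂) (hb : IsCoprodDiagram b₁ b₂) :
    IsCoprodDiagram (y₁ ≫ b₁) (coprod.desc (y₂ ≫ b₁) b₂) := by
  obtain ⟨c⟩ := hy; obtain ⟨d⟩ := hb
  have cfl : ∀ s : BinaryCofan Y₁ Y₂, y₁ ≫ c.desc s = s.inl := fun s =>
    c.fac s ⟨WalkingPair.left⟩
  have cfr : ∀ s : BinaryCofan Y₁ Y₂, y₂ ≫ c.desc s = s.inr := fun s =>
    c.fac s ⟨WalkingPair.right⟩
  have dfl : ∀ s : BinaryCofan B₁ B₂, b₁ ≫ d.desc s = s.inl := fun s =>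
    d.fac s ⟨WalkingPair.left⟩
  have dfr : ∀ s : BinaryCofan B₁ B₂, b₂ ≫ d.desc s = s.inr := fun s =>
    d.fac s ⟨WalkingPair.right⟩
  refine ⟨BinaryCofan.isColimitMk
    (fun s => d.desc (BinaryCofan.mk
      (c.desc (BinaryCofan.mk s.inl (coprod.inl ≫ s.inr))) (coprod.inr ≫ s.inr)))
    (fun s => ?_) (fun s => ?_) (fun s m h1 h2 => ?_)⟩
  · exact (Category.assoc _ _ _).trans ((congrArg (y₁ ≫ ·) (dfl _)).trans (cfl _))
  · apply coprod.hom_ext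
    · exact (coprod.inl_desc_assoc _ _ _).trans ((Category.assoc _ _ _).trans ((congrArg (y₂ ≫ ·) (dfl _)).trans (cfr _)))
    · exact (coprod.inr_desc_assoc _ _ _).trans (dfr _)
  · refine d.uniq (BinaryCofan.mk
      (c.desc (BinaryCofan.mk s.inl (coprod.inl ≫ s.inr))) (coprod.inr ≫ s.inr)) m ?_
    have hy2 : y₂ ≫ b₁ ≫ m = coprod.inl ≫ s.inr := by
      rw [← Category.assoc, show y₂ ≫ b₁ = coprod.inl ≫ coprod.desc (y₂ ≫ b₁) b₂ by rw [coprod.inl_desc],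
        Category.assoc, h2]
    have hb2 : b₂ ≫ m = coprod.inr ≫ s.inr := by
      rw [show b₂ = coprod.inr ≫ coprod.desc (y₂ ≫ b₁) b₂ by rw [coprod.inr_desc], Category.assoc, h2]
    rintro ⟨⟨⟩⟩
    · have : b₁ ≫ m = c.desc (BinaryCofan.mk s.inl (coprod.inl ≫ s.inr)) := by
        refine c.uniq (BinaryCofan.mk s.inl (coprod.inl ≫ s.inr)) (b₁ ≫ m) ?_
        rintro ⟨⟨⟩⟩
        · exact (Category.assoc _ _ _).symm.trans h1
        · exact hy2
      exact this
    · exact hb2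

end PfAux

/-- If every coproduct inclusion is extensive, then the pullback of an extensive morphism
along a coproduct inclusion exists and is extensive. -/
theorem pullback_of_extensive_along_inclusion [HasBinaryCoproducts C]
    (hinc : ∀ {A X : C} (ι : A ⟶ X), IsCoprodInclusion ι → Extensive ι)
    {A B B₁ : C} (f : A ⟶ B) (hf : Extensive f)
    (b₁ : B₁ ⟶ B) (hb : IsCoprodInclusion b₁) :
    (∃ (A₁ : C) (a₁ : A₁ ⟶ A) (f₁ : A₁ ⟶ B₁), IsPullback a₁ f₁ f b₁) ∧
    (∀ {A₁ : C} (a₁ : A₁ ⟶ A) (f₁ : A₁ ⟶ B₁), IsPullback a₁ f₁ f b₁ → Extensive f₁) := by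
  obtain ⟨B₂, b₂, hB⟩ := hb
  obtain ⟨A₁', A₂, a₁', a₂, f₁', f₂, pb₁', pb₂, hA'⟩ := hf.1 b₁ b₂ hB
  refine ⟨⟨A₁', a₁', f₁', pb₁'⟩, ?_⟩
  intro A₁ a₁ f₁ pb₁
  -- transport the complement `a₂` to the given pullback `a₁`
  have hA : IsCoprodDiagram a₁ a₂ :=
    PfAux.transport (pb₁.isoIsPullback _ _ pb₁') (Iso.refl A₂) (by simp) (by simp) hA'
  have hainc : IsCoprodInclusion a₁ := ⟨A₂, a₂, hA⟩
  refine ⟨?_, ?_⟩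
  · -- (E1) for f₁
    intro Y₁ Y₂ y₁ y₂ hY
    set z : Y₂ ⨿ B₂ ⟶ B := coprod.desc (y₂ ≫ b₁) b₂ with hzdef
    have hz : IsCoprodDiagram (y₁ ≫ b₁) z := PfAux.assoc hY hB
    obtain ⟨P₁, Q, p₁, q, g₁, gQ, pbp₁, pbq, hPQ⟩ := hf.1 _ _ hz
    have hz₂ : IsCoprodDiagram (y₂ ≫ b₁) (coprod.desc (y₁ ≫ b₁) b₂) :=
      PfAux.assoc (PfAux.swap hY) hB
    obtain ⟨P₂, Q₂, p₂, q₂, g₂, gQ₂, pbp₂, -, -⟩ := hf.1 _ _ hz₂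
    -- (E2) of the extensive inclusion b₁
    obtain ⟨sq₁, sq₂⟩ := (hinc b₁ ⟨B₂, b₂, hB⟩).2 y₁ y₂ (y₁ ≫ b₁) z (𝟙 Y₁) coprod.inl
      (by simp) (by simp [hzdef]; rw [coprod.inl_desc]) hz hY
    -- the pullback of f₁ along y₁
    have w₁ : p₁ ≫ f = (g₁ ≫ y₁) ≫ b₁ := by rw [pbp₁.w, Category.assoc]
    set v₁ : P₁ ⟶ A₁ := pb₁.lift p₁ (g₁ ≫ y₁) w₁ with hv₁def
    have hv₁a : v₁ ≫ a₁ = p₁ := pb₁.lift_fst _ _ _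
    have hv₁f : v₁ ≫ f₁ = g₁ ≫ y₁ := pb₁.lift_snd _ _ _
    have pbv₁ : IsPullback v₁ g₁ f₁ y₁ :=
      IsPullback.of_right (by rw [hv₁a]; exact pbp₁) hv₁f pb₁
    -- the pullback of f₁ along y₂
    have w₂ : p₂ ≫ f = (g₂ ≫ y₂) ≫ b₁ := by rw [pbp₂.w, Category.assoc]
    set v₂ : P₂ ⟶ A₁ := pb₁.lift p₂ (g₂ ≫ y₂) w₂ with hv₂def
    have hv₂a : v₂ ≫ a₁ = p₂ := pb₁.lift_fst _ _ _
    have hv₂f : v₂ ≫ f₁ = g₂ ≫ y₂ := pb₁.lift_snd _ _ _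
    have pbv₂ : IsPullback v₂ g₂ f₁ y₂ :=
      IsPullback.of_right (by rw [hv₂a]; exact pbp₂) hv₂f pb₁
    -- comparison map from P₂ to Q
    have wcomm : p₂ ≫ f = (g₂ ≫ coprod.inl) ≫ z := by
      rw [pbp₂.w, Category.assoc, hzdef, coprod.inl_desc, ← Category.assoc]
    set w : P₂ ⟶ Q := pbq.lift p₂ (g₂ ≫ coprod.inl) wcomm with hwdef
    have hwq : w ≫ q = p₂ := pbq.lift_fst _ _ _
    have hwg : w ≫ gQ = g₂ ≫ coprod.inl := pbq.lift_snd _ _ _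
    have pbgw : IsPullback g₂ w coprod.inl gQ := by
      refine IsPullback.of_bot ?_ hwg.symm pbq.flip
      rw [hwq, show coprod.inl ≫ z = y₂ ≫ b₁ by simp [hzdef]; rw [coprod.inl_desc]]
      exact pbp₂.flip
    -- P₂ is the pullback of a₁ along q
    have pbv₂a : IsPullback v₂ w a₁ q := by
      refine IsPullback.of_right ?_ (hv₂a.trans hwq.symm) pb₁.flip
      rw [hv₂f, pbq.w]
      exact pbgw.paste_horiz sq₂
    -- P₁ is the pullback of a₁ along p₁
    have idsq : IsPullback g₁ (𝟙 P₁) (𝟙 Y₁) g₁ := IsPullback.of_vert_isIso ⟨by simp⟩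
    have pbv₁a : IsPullback v₁ (𝟙 P₁) a₁ p₁ := by
      refine IsPullback.of_right ?_ (by rw [hv₁a, Category.id_comp]) pb₁.flip
      rw [hv₁f, pbp₁.w]
      exact idsq.paste_horiz sq₁
    -- (E1) of the extensive inclusion a₁ for the decomposition A = P₁ ⊔ Q
    obtain ⟨R₁, R₂, r₁, r₂, s₁, s₂, pbr₁, pbr₂, hR⟩ := (hinc a₁ hainc).1 p₁ q hPQ
    exact ⟨P₁, P₂, v₁, v₂, g₁, g₂, pbv₁, pbv₂,
      PfAux.transport (pbv₁a.isoIsPullback _ _ pbr₁) (pbv₂a.isoIsPullback _ _ pbr₂)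
        (by simp) (by simp) hR⟩
  · -- (E2) for f₁
    intro U₁ U₂ Y₁ Y₂ u₁ u₂ y₁ y₂ h₁ h₂ comm₁ comm₂ hYc hUc
    have hz : IsCoprodDiagram (y₁ ≫ b₁) (coprod.desc (y₂ ≫ b₁) b₂) := PfAux.assoc hYc hB
    have ht : IsCoprodDiagram (u₁ ≫ a₁) (coprod.desc (u₂ ≫ a₁) a₂) := PfAux.assoc hUc hA
    have cm1 : (u₁ ≫ a₁) ≫ f = h₁ ≫ (y₁ ≫ b₁) := by
      rw [Category.assoc, pb₁.w, ← Category.assoc, comm₁, Category.assoc]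
    have cm1' : (u₂ ≫ a₁) ≫ f = h₂ ≫ (y₂ ≫ b₁) := by
      rw [Category.assoc, pb₁.w, ← Category.assoc, comm₂, Category.assoc]
    have cm2 : coprod.desc (u₂ ≫ a₁) a₂ ≫ f =
        coprod.map h₂ f₂ ≫ coprod.desc (y₂ ≫ b₁) b₂ := by
      apply coprod.hom_ext
      · rw [coprod.inl_desc_assoc, coprod.inl_map_assoc, coprod.inl_desc]
        simpa [← Category.assoc] using cm1'
      · rw [coprod.inr_desc_assoc, coprod.inr_map_assoc, coprod.inr_desc]
        simpa using pb₂.w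
    have cm2' : coprod.desc (u₁ ≫ a₁) a₂ ≫ f =
        coprod.map h₁ f₂ ≫ coprod.desc (y₁ ≫ b₁) b₂ := by
      apply coprod.hom_ext
      · rw [coprod.inl_desc_assoc, coprod.inl_map_assoc, coprod.inl_desc]
        simpa [← Category.assoc] using cm1
      · rw [coprod.inr_desc_assoc, coprod.inr_map_assoc, coprod.inr_desc]
        simpa using pb₂.w
    obtain ⟨S₁, -⟩ := hf.2 (u₁ ≫ a₁) (coprod.desc (u₂ ≫ a₁) a₂) (y₁ ≫ b₁)
      (coprod.desc (y₂ ≫ b₁) b₂) h₁ (coprod.map h₂ f₂) cm1 cm2 hz ht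
    obtain ⟨S₂, -⟩ := hf.2 (u₂ ≫ a₁) (coprod.desc (u₁ ≫ a₁) a₂) (y₂ ≫ b₁)
      (coprod.desc (y₁ ≫ b₁) b₂) h₂ (coprod.map h₁ f₂) cm1' cm2'
      (PfAux.assoc (PfAux.swap hYc) hB) (PfAux.assoc (PfAux.swap hUc) hA)
    exact ⟨IsPullback.of_right S₁ comm₁ pb₁, IsPullback.of_right S₂ comm₂ pb₁⟩
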